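/- Consider the C-FOPC recursion under Assumption 1 only: e_{k+1} ≤ ρ_C^C (η₁ e_k + η₂) where e_k = ‖x_k − x*(t_k)‖, η₁ = ρ_P^P + (ρ_P^P + 1)(2L/m), η₂ = (2ρ_P^P + 1)Δ₁ and Δ₁ = 2h(C₀/m)(1 + L/m). If τ₀ := ρ_C^C η₁ < 1, then limsup_{k→∞} e_k ≤ ρ_C^C(2ρ_P^P + 1)Δ₁ / (1 − τ₀), which is O(ρ_C^C h). -/
import Mathlib

lemma aux_limsup (e : ℕ → ℝ) (τ b : ℝ) (hτ0 : 0 ≤ τ) (hτ1 : τ < 1) (hb : 0 ≤ b) (hpos : ∀ k, 0 ≤ e k)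
    (hrec : ∀ k, e (k + 1) ≤ τ * e k + b) :
    Filter.limsup e Filter.atTop ≤ b / (1 - τ) := by
  have h1τ : 0 < 1 - τ := by linarith
  have hbd : 0 ≤ b / (1 - τ) := div_nonneg hb h1τ.le
  have hub : ∀ k, e k ≤ τ ^ k * e 0 + b / (1 - τ) := by
    intro k
    induction k with
    | zero => simp; linarith
    | succ n ih =>
      have := hrec n
      have h2 : τ * e n ≤ τ * (τ ^ n * e 0 + b / (1 - τ)) :=
        mul_le_mul_of_nonneg_left ih hτ0
      have h3 : τ * (b / (1 - τ)) + b = b / (1 - τ) := by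
        field_simp; ring
      calc e (n + 1) ≤ τ * e n + b := this
        _ ≤ τ * (τ ^ n * e 0 + b / (1 - τ)) + b := by linarith
        _ = τ ^ (n + 1) * e 0 + (τ * (b / (1 - τ)) + b) := by ring
        _ = τ ^ (n + 1) * e 0 + b / (1 - τ) := by rw [h3]
  have htend : Filter.Tendsto (fun k => τ ^ k * e 0 + b / (1 - τ)) Filter.atTop
      (nhds (b / (1 - τ))) := by
    have h0 : Filter.Tendsto (fun k : ℕ => τ ^ k) Filter.atTop (nhds 0) :=
      tendsto_pow_atTop_nhds_zero_of_lt_one hτ0 hτ1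
    have := (h0.mul_const (e 0)).add_const (b / (1 - τ))
    simpa using this
  calc Filter.limsup e Filter.atTop
      ≤ Filter.limsup (fun k => τ ^ k * e 0 + b / (1 - τ)) Filter.atTop := by
        have hcb : Filter.IsCoboundedUnder (· ≤ ·) Filter.atTop e :=
          (Filter.isBoundedUnder_of ⟨0, fun k => hpos k⟩ :
            Filter.IsBoundedUnder (· ≥ ·) Filter.atTop e).isCoboundedUnder_le
        exact Filter.limsup_le_limsup (Filter.Eventually.of_forall hub) hcb
          htend.isBoundedUnder_le
    _ = b / (1 - τ) := htend.limsup_eq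

theorem stmt_10 (e : ℕ → ℝ) (ρP ρC m L C₀ h : ℝ) (P C : ℕ)
    (hρP0 : 0 ≤ ρP) (hρP1 : ρP < 1) (hρC0 : 0 ≤ ρC) (hρC1 : ρC < 1)
    (hm : 0 < m) (hmL : m ≤ L) (hC₀ : 0 < C₀) (hh : 0 < h)
    (hpos : ∀ k, 0 ≤ e k)
    (hrec : ∀ k, e (k + 1) ≤
      ρC ^ C * ((ρP ^ P + (ρP ^ P + 1) * (2 * L / m)) * e k +
        (2 * ρP ^ P + 1) * (2 * h * (C₀ / m) * (1 + L / m))))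
    (hτ : ρC ^ C * (ρP ^ P + (ρP ^ P + 1) * (2 * L / m)) < 1) :
    Filter.limsup e Filter.atTop ≤
      ρC ^ C * (2 * ρP ^ P + 1) * (2 * h * (C₀ / m) * (1 + L / m)) /
        (1 - ρC ^ C * (ρP ^ P + (ρP ^ P + 1) * (2 * L / m))) := by
  set τ := ρC ^ C * (ρP ^ P + (ρP ^ P + 1) * (2 * L / m)) with hτdef
  set b := ρC ^ C * ((2 * ρP ^ P + 1) * (2 * h * (C₀ / m) * (1 + L / m))) with hbdef
  have hL : 0 < L := lt_of_lt_of_le hm hmL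
  have hρPP : (0:ℝ) ≤ ρP ^ P := pow_nonneg hρP0 P
  have hρCC : (0:ℝ) ≤ ρC ^ C := pow_nonneg hρC0 C
  have hτ0 : 0 ≤ τ := by
    apply mul_nonneg hρCC
    have : 0 ≤ 2 * L / m := by positivity
    nlinarith
  have hb0 : 0 ≤ b := by
    have hA : (0:ℝ) ≤ 2 * ρP ^ P + 1 := by linarith
    have h1 : 0 < C₀ / m := div_pos hC₀ hm
    have h2 : 0 < L / m := div_pos hL hm
    have hB : (0:ℝ) ≤ 2 * h * (C₀ / m) * (1 + L / m) :=
      (mul_pos (mul_pos (mul_pos two_pos hh) h1) (by linarith : (0:ℝ) < 1 + L / m)).le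
    exact mul_nonneg hρCC (mul_nonneg hA hB)
  have key := aux_limsup e τ b hτ0 hτ hb0 hpos (by
    intro k
    have := hrec k
    calc e (k+1) ≤ ρC ^ C * ((ρP ^ P + (ρP ^ P + 1) * (2 * L / m)) * e k +
        (2 * ρP ^ P + 1) * (2 * h * (C₀ / m) * (1 + L / m))) := this
      _ = τ * e k + b := by rw [hτdef, hbdef]; ring)
  calc Filter.limsup e Filter.atTop ≤ b / (1 - τ) := key
    _ = ρC ^ C * (2 * ρP ^ P + 1) * (2 * h * (C₀ / m) * (1 + L / m)) / (1 - τ) := by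
        rw [hbdef]; ring_nf
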